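/- Suppose centered points v̂(μ) exist for all μ > 0. Let θ ∈ (0, 1/2], ε ∈ (0, q⁻¹(θ)), ζ := q⁻¹(θ) − ε, and let k > 1 and N ∈ ℕ satisfy θ^(2^N) ≤ ε² and (1/2)·log k = q⁻¹(ζ²/m). Define the short-step iteration: μ_{j+1} = μ_j/k and v_{j+1} is obtained from v_j by N full Newton steps v ↦ v + d(v, μ_{j+1}) at parameter μ_{j+1}, starting from v₀ = v̂(μ₀). Then for every j with ‖v_j − v̂(μ_j)‖ ≤ ε, one has h(v̂(μ_{j+1}), v_j) ≤ θ and ‖v_{j+1} − v̂(μ_{j+1})‖ ≤ ε; consequently, for μ_f > 0 and J := ⌈c⁻¹·√m·log(μ₀/μ_f)⌉ with c := 2·q⁻¹(ζ²), the output satisfies μ_J ≤ μ_f and ‖v_J − v̂(μ_J)‖ ≤ ε, after at most N·J total Newton steps. -/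

import Mathlib

open Matrix
set_option maxHeartbeats 1000000

/-- Elementwise exponentiation `e^v` of a vector. -/
noncomputable def expV {m : ℕ} (v : Fin m → ℝ) : Fin m → ℝ := fun i => Real.exp (v i)

/-- The log-domain Newton system: `(d, x)` satisfies
`√μ·Aᵀ(eᵛ + eᵛ∘d) = Wx + c` and `√μ·(e^{−v} − e^{−v}∘d) = Ax + b`. -/
noncomputable def IsNewton {m n : ℕ} (A : Matrix (Fin m) (Fin n) ℝ) (b : Fin m → ℝ)
    (c : Fin n → ℝ) (W : Matrix (Fin n) (Fin n) ℝ) (μ : ℝ) (v d : Fin m → ℝ)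
    (x : Fin n → ℝ) : Prop :=
  Real.sqrt μ • (Aᵀ).mulVec (expV v + expV v * d) = W.mulVec x + c ∧
  Real.sqrt μ • (expV (-v) - expV (-v) * d) = A.mulVec x + b

/-- `v` is a centered point for parameter `μ`, witnessed by `x`:
`√μ·Aᵀeᵛ = Wx + c` and `√μ·e^{−v} = Ax + b`. -/
noncomputable def IsCentered {m n : ℕ} (A : Matrix (Fin m) (Fin n) ℝ) (b : Fin m → ℝ)
    (c : Fin n → ℝ) (W : Matrix (Fin n) (Fin n) ℝ) (μ : ℝ) (v : Fin m → ℝ)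
    (x : Fin n → ℝ) : Prop :=
  Real.sqrt μ • (Aᵀ).mulVec (expV v) = W.mulVec x + c ∧
  Real.sqrt μ • expV (-v) = A.mulVec x + b

/-- The divergence `h(u,v) := ⟨eᵘ, e^{−v}⟩ + ⟨e^{−u}, eᵛ⟩ − 2m`. -/
noncomputable def diverg {m : ℕ} (u v : Fin m → ℝ) : ℝ :=
  (∑ i, Real.exp (u i) * Real.exp (-v i)) + (∑ i, Real.exp (-u i) * Real.exp (v i))
    - 2 * m

/-- The Euclidean norm of a vector in `ℝᵐ`. -/
noncomputable def enormV {m : ℕ} (d : Fin m → ℝ) : ℝ := Real.sqrt (∑ i, d i ^ 2)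

noncomputable def qf (t : ℝ) : ℝ := 2 * (Real.cosh t - 1)

lemma qf_nonneg (t : ℝ) : 0 ≤ qf t := by
  have := Real.one_le_cosh t; unfold qf; linarith

lemma qf_even (t : ℝ) : qf (-t) = qf t := by simp [qf]

lemma qf_abs (t : ℝ) : qf |t| = qf t := by simp [qf, Real.cosh_abs]

lemma cosh_eq_half (t : ℝ) : Real.cosh t = 2 * Real.sinh (t/2) ^ 2 + 1 := by
  have h : t = 2 * (t/2) := by ring
  rw [h, Real.cosh_two_mul, Real.cosh_sq]; ring

lemma qf_eq (t : ℝ) : qf t = 4 * Real.sinh (t/2) ^ 2 := by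
  rw [qf, cosh_eq_half]; ring

lemma self_le_sinh_abs (t : ℝ) : |t| ≤ Real.sinh |t| := by
  rw [Real.self_le_sinh_iff]; positivity

lemma sq_le_qf (t : ℝ) : t ^ 2 ≤ qf t := by
  rw [qf_eq]
  have h1 : |t/2| ≤ Real.sinh |t/2| := self_le_sinh_abs _
  have h2 : (t/2)^2 ≤ Real.sinh (t/2) ^ 2 := by
    rw [← sq_abs (t/2), ← sq_abs (Real.sinh (t/2)), Real.abs_sinh]
    exact pow_le_pow_left₀ (abs_nonneg _) h1 2
  nlinarith

lemma sinh_le_self_mul_cosh {x : ℝ} (hx : 0 ≤ x) : Real.sinh x ≤ x * Real.cosh x := by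
  have hf : ∀ y, HasDerivAt (fun z => z * Real.cosh z - Real.sinh z)
      (y * Real.sinh y) y := by
    intro y
    have h1 : HasDerivAt (fun z : ℝ => z * Real.cosh z)
        (1 * Real.cosh y + y * Real.sinh y) y :=
      (hasDerivAt_id y).mul (Real.hasDerivAt_cosh y)
    have := h1.sub (Real.hasDerivAt_sinh y)
    exact this.congr_deriv (by ring)
  have hm : Monotone (fun z => z * Real.cosh z - Real.sinh z) ∨ True := Or.inr trivial
  have key : (0 : ℝ) * Real.cosh 0 - Real.sinh 0 ≤ x * Real.cosh x - Real.sinh x := by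
    have hmono : MonotoneOn (fun z => z * Real.cosh z - Real.sinh z) (Set.Ici 0) := by
      apply monotoneOn_of_hasDerivWithinAt_nonneg (convex_Ici 0)
        (Continuous.continuousOn (by continuity))
        (fun y hy => ((hf y).hasDerivWithinAt))
      intro y hy
      rw [interior_Ici] at hy
      have : 0 < y := hy
      have := Real.sinh_nonneg_iff.mpr this.le
      positivity
    exact hmono (by simp) (Set.mem_Ici.mpr hx) hx
  simpa using key

-- sinh (α x) ≤ α * sinh x  for α ∈ [0,1], x ≥ 0
lemma sinh_alpha {α x : ℝ} (hα0 : 0 ≤ α) (hα1 : α ≤ 1) (hx : 0 ≤ x) :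
    Real.sinh (α * x) ≤ α * Real.sinh x := by
  have hf : ∀ y, HasDerivAt (fun z => α * Real.sinh z - Real.sinh (α * z))
      (α * Real.cosh y - Real.cosh (α * y) * α) y := by
    intro y
    have h1 := (Real.hasDerivAt_sinh y).const_mul α
    have h2 : HasDerivAt (fun z : ℝ => Real.sinh (α * z)) (Real.cosh (α*y) * α) y := by
      have hinner : HasDerivAt (fun z : ℝ => α * z) α y := by
        simpa using (hasDerivAt_id y).const_mul α
      exact (Real.hasDerivAt_sinh (α*y)).comp y hinner
    exact h1.sub h2
  have hmono : MonotoneOn (fun z => α * Real.sinh z - Real.sinh (α * z)) (Set.Ici 0) := by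
    apply monotoneOn_of_hasDerivWithinAt_nonneg (convex_Ici 0)
      (Continuous.continuousOn (by continuity))
      (fun y hy => ((hf y).hasDerivWithinAt))
    intro y hy
    rw [interior_Ici] at hy
    have hy' : (0:ℝ) < y := hy
    have hc : Real.cosh (α * y) ≤ Real.cosh y := by
      rw [Real.cosh_le_cosh]
      rw [abs_of_nonneg (by positivity), abs_of_nonneg hy'.le]
      nlinarith
    nlinarith [Real.cosh_pos (α * y), Real.cosh_pos y]
  have := hmono (Set.mem_Ici.mpr le_rfl) (Set.mem_Ici.mpr hx) hx
  simpa using this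

lemma qf_scale {α t : ℝ} (hα0 : 0 ≤ α) (hα1 : α ≤ 1) (ht : 0 ≤ t) :
    qf (α * t) ≤ α ^ 2 * qf t := by
  rw [qf_eq, qf_eq]
  have h : Real.sinh (α * t / 2) ≤ α * Real.sinh (t/2) := by
    have := sinh_alpha hα0 hα1 (x := t/2) (by positivity)
    calc Real.sinh (α * t / 2) = Real.sinh (α * (t/2)) := by ring_nf
    _ ≤ α * Real.sinh (t/2) := this
  have h0 : 0 ≤ Real.sinh (α * t / 2) := Real.sinh_nonneg_iff.mpr (by positivity)
  nlinarith [Real.sinh_nonneg_iff.mpr (show (0:ℝ) ≤ t/2 by positivity)]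
lemma qf_mono {a b : ℝ} (ha : 0 ≤ a) (hab : a ≤ b) : qf a ≤ qf b := by
  unfold qf
  have : Real.cosh a ≤ Real.cosh b := by
    rw [Real.cosh_le_cosh, abs_of_nonneg ha, abs_of_nonneg (ha.trans hab)]; exact hab
  linarith

lemma qf_lt_imp {a b : ℝ} (ha : 0 ≤ a) (hb : 0 ≤ b) (h : qf a ≤ qf b) : a ≤ b := by
  by_contra hc
  push_neg at hc
  have : Real.cosh b < Real.cosh a := by
    rw [Real.cosh_lt_cosh, abs_of_nonneg ha, abs_of_nonneg hb]; exact hc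
  unfold qf at h; linarith

-- qf t ≤ t^2 * cosh t
lemma qf_le_sq_mul_cosh (t : ℝ) : qf t ≤ t ^ 2 * Real.cosh t := by
  rw [qf_eq]
  have h1 : Real.sinh |t/2| ≤ |t/2| * Real.cosh |t/2| := sinh_le_self_mul_cosh (abs_nonneg _)
  have h2 : Real.sinh (t/2)^2 ≤ (t/2)^2 * Real.cosh (t/2)^2 := by
    have hs : Real.sinh |t/2| ^ 2 = Real.sinh (t/2) ^2 := by
      rw [← Real.abs_sinh, sq_abs]
    have hnn : 0 ≤ Real.sinh |t/2| := Real.sinh_nonneg_iff.mpr (abs_nonneg _)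
    have := pow_le_pow_left₀ hnn h1 2
    rw [hs] at this
    calc Real.sinh (t/2)^2 ≤ (|t/2| * Real.cosh |t/2|)^2 := this
    _ = (t/2)^2 * Real.cosh (t/2)^2 := by rw [mul_pow, sq_abs, Real.cosh_abs]
  have h3 : Real.cosh (t/2) ^ 2 ≤ Real.cosh t := by
    have : Real.cosh (2 * (t/2)) = Real.cosh (t/2)^2 + Real.sinh (t/2)^2 := Real.cosh_two_mul _
    have ht : (2:ℝ) * (t/2) = t := by ring
    rw [ht] at this
    nlinarith [sq_nonneg (Real.sinh (t/2))]
  nlinarith [sq_nonneg t, Real.cosh_pos (t/2), sq_nonneg (t/2), Real.one_le_cosh (t/2)]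

lemma cosh_le_inv {t : ℝ} (ht : t^2 < 2) : Real.cosh t * (2 - t^2) ≤ 2 := by
  have := qf_le_sq_mul_cosh t
  unfold qf at this; nlinarith

-- |sinh t - t| ≤ (cosh t - 1)/2 for |t| ≤ log 3
lemma sinh_sub_le_aux {t : ℝ} (h0 : 0 ≤ t) (h1 : t ≤ Real.log 3) :
    Real.sinh t - t ≤ (Real.cosh t - 1)/2 := by
  set f : ℝ → ℝ := fun z => z + (Real.cosh z - 1)/2 - Real.sinh z with hfdef
  have hf : ∀ y, HasDerivAt f (1 + Real.sinh y / 2 - Real.cosh y) y := by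
    intro y
    have h1 : HasDerivAt (fun z : ℝ => z + (Real.cosh z - 1)/2)
        (1 + Real.sinh y/2) y := by
      have hc : HasDerivAt (fun z : ℝ => (Real.cosh z - 1)/2) (Real.sinh y / 2) y := by
        have := ((Real.hasDerivAt_cosh y).sub_const 1).div_const 2
        exact this
      exact (hasDerivAt_id' y).add hc
    exact h1.sub (Real.hasDerivAt_sinh y)
  have hmono : MonotoneOn f (Set.Icc 0 (Real.log 3)) := by
    apply monotoneOn_of_hasDerivWithinAt_nonneg (convex_Icc _ _)
      (Continuous.continuousOn (by fun_prop))
      (fun y hy => ((hf y).hasDerivWithinAt))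
    intro y hy
    rw [interior_Icc] at hy
    obtain ⟨hy0, hy1⟩ := hy
    -- with x = exp y ∈ [1,3]: deriv = (x-1)(3-x)/(4x) ≥ 0
    have hx1 : 1 ≤ Real.exp y := Real.one_le_exp hy0.le
    have hx3 : Real.exp y ≤ 3 := by
      calc Real.exp y ≤ Real.exp (Real.log 3) := Real.exp_le_exp.mpr hy1.le
      _ = 3 := Real.exp_log (by norm_num)
    have hinv : Real.exp (-y) = (Real.exp y)⁻¹ := Real.exp_neg y
    rw [Real.sinh_eq, Real.cosh_eq, hinv]
    have hxpos : 0 < Real.exp y := Real.exp_pos y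
    have hxinv : Real.exp y * (Real.exp y)⁻¹ = 1 := mul_inv_cancel₀ hxpos.ne'
    have key : 0 ≤ (Real.exp y - 1) * (3 - Real.exp y) := by nlinarith
    have hinv_le : (Real.exp y)⁻¹ ≤ 1 := by
      rw [inv_le_one_iff₀]; right; exact hx1
    nlinarith [key, hxpos, hxinv]
  have := hmono (Set.mem_Icc.mpr ⟨le_rfl, Real.log_nonneg (by norm_num)⟩)
    (Set.mem_Icc.mpr ⟨h0, h1⟩) h0
  simp only [hfdef, Real.cosh_zero, Real.sinh_zero] at this
  linarith [this]

lemma abs_sinh_sub_le {t : ℝ} (h : |t| ≤ Real.log 3) :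
    |Real.sinh t - t| ≤ (Real.cosh t - 1)/2 := by
  have h0 : Real.sinh |t| - |t| ≤ (Real.cosh |t| - 1)/2 := sinh_sub_le_aux (abs_nonneg t) h
  have h1 : 0 ≤ Real.sinh |t| - |t| := by
    have := Real.self_le_sinh_iff.mpr (abs_nonneg t); linarith
  rcases le_total 0 t with ht | ht
  · rw [abs_of_nonneg ht] at h0 h1
    rw [abs_of_nonneg h1]; exact h0
  · rw [abs_of_nonpos ht] at h0 h1
    rw [Real.sinh_neg] at h0 h1
    rw [Real.cosh_neg] at h0
    have habs : |Real.sinh t - t| = -(Real.sinh t) - (-t) := by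
      rw [abs_of_nonpos (by linarith)]; ring
    rw [habs]; linarith
lemma cosh_superadd {a b : ℝ} (ha : 0 ≤ a) (hb : 0 ≤ b) :
    Real.cosh a + Real.cosh b ≤ 1 + Real.cosh (Real.sqrt (a^2 + b^2)) := by
  rcases eq_or_lt_of_le hb with hb0 | hbpos
  · rw [← hb0]
    simp [Real.sqrt_sq ha]
    linarith
  · set c : ℝ → ℝ := fun z => Real.sqrt (z^2 + b^2) with hc
    have hcpos : ∀ z : ℝ, 0 < z^2 + b^2 := by intro z; positivity
    have hcsq : ∀ z : ℝ, 0 < c z := fun z => Real.sqrt_pos.mpr (hcpos z)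
    have hF : ∀ z : ℝ, HasDerivAt (fun y => Real.cosh (c y) - Real.cosh y)
        (Real.sinh (c z) * (1/(2 * c z) * (2 * z)) - Real.sinh z) z := by
      intro z
      have h1 : HasDerivAt (fun y : ℝ => y^2 + b^2) (2 * z) z := by
        simpa using ((hasDerivAt_pow 2 z).add_const (b^2))
      have h2 : HasDerivAt (fun y => Real.sqrt (y^2 + b^2)) (1/(2 * c z) * (2*z)) z := by
        have := (Real.hasDerivAt_sqrt (hcpos z).ne').comp z h1
        simpa [hc, Function.comp_def] using this
      have h3 : HasDerivAt (fun y => Real.cosh (c y))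
          (Real.sinh (c z) * (1/(2 * c z) * (2 * z))) z :=
        (Real.hasDerivAt_cosh (c z)).comp z h2
      exact h3.sub (Real.hasDerivAt_cosh z)
    have hmono : MonotoneOn (fun y => Real.cosh (c y) - Real.cosh y) (Set.Ici 0) := by
      apply monotoneOn_of_hasDerivWithinAt_nonneg (convex_Ici 0)
        (Continuous.continuousOn (by fun_prop))
        (fun y _ => (hF y).hasDerivWithinAt)
      intro z hz
      rw [interior_Ici] at hz
      have hz' : (0:ℝ) < z := hz
      have hzc : z ≤ c z := by
        rw [hc]
        have : z = Real.sqrt (z^2) := (Real.sqrt_sq hz'.le).symm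
        rw [this]
        apply Real.sqrt_le_sqrt
        nlinarith [Real.sq_sqrt (sq_nonneg z)]
      have halpha : Real.sinh z ≤ (z / c z) * Real.sinh (c z) := by
        have h := sinh_alpha (α := z / c z) (x := c z)
          (by positivity) (by rw [div_le_one (hcsq z)]; exact hzc) (hcsq z).le
        rwa [div_mul_cancel₀ _ (hcsq z).ne'] at h
      have : Real.sinh (c z) * (1/(2 * c z) * (2 * z)) = (z / c z) * Real.sinh (c z) := by
        field_simp
      rw [this]
      linarith
    have h0 := hmono (Set.mem_Ici.mpr le_rfl) (Set.mem_Ici.mpr ha) ha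
    simp only [hc] at h0
    have hb2 : Real.sqrt (0^2 + b^2) = b := by
      rw [show (0:ℝ)^2 + b^2 = b^2 by ring, Real.sqrt_sq hb]
    rw [hb2] at h0
    simp only [Real.cosh_zero] at h0
    linarith

lemma qf_superadd {a b : ℝ} (ha : 0 ≤ a) (hb : 0 ≤ b) :
    qf a + qf b ≤ qf (Real.sqrt (a^2 + b^2)) := by
  have := cosh_superadd ha hb
  unfold qf; linarith

lemma sum_qf_le {ι : Type*} (s : Finset ι) (t : ι → ℝ) :
    ∑ i ∈ s, qf (t i) ≤ qf (Real.sqrt (∑ i ∈ s, t i ^ 2)) := by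
  induction s using Finset.cons_induction with
  | empty => simp [qf]
  | cons a s has ih =>
    rw [Finset.sum_cons, Finset.sum_cons]
    have hS : (0:ℝ) ≤ ∑ i ∈ s, t i ^ 2 := Finset.sum_nonneg (fun i _ => sq_nonneg _)
    have key := qf_superadd (abs_nonneg (t a)) (Real.sqrt_nonneg (∑ i ∈ s, t i ^ 2))
    rw [qf_abs, sq_abs, Real.sq_sqrt hS] at key
    calc qf (t a) + ∑ i ∈ s, qf (t i)
        ≤ qf (t a) + qf (Real.sqrt (∑ i ∈ s, t i ^ 2)) := by linarith [ih]
      _ ≤ qf (Real.sqrt (t a ^ 2 + ∑ i ∈ s, t i ^ 2)) := key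
lemma psd_dot {m n : ℕ} (A : Matrix (Fin m) (Fin n) ℝ) {W : Matrix (Fin n) (Fin n) ℝ}
    (hW : W.PosSemidef) (p : Fin m → ℝ) (y : Fin n → ℝ)
    (hp : (Aᵀ).mulVec p = W.mulVec y) : 0 ≤ p ⬝ᵥ A.mulVec y := by
  rw [Matrix.dotProduct_mulVec, ← Matrix.mulVec_transpose, hp]
  have := hW.dotProduct_mulVec_nonneg y
  simpa [dotProduct_comm] using this

lemma center_sub {m n : ℕ} (A : Matrix (Fin m) (Fin n) ℝ) (b : Fin m → ℝ)
    (c : Fin n → ℝ) {W : Matrix (Fin n) (Fin n) ℝ} (hW : W.PosSemidef)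
    {μ₁ μ₂ : ℝ} {v₁ v₂ : Fin m → ℝ} {x₁ x₂ : Fin n → ℝ}
    (h1 : IsCentered A b c W μ₁ v₁ x₁) (h2 : IsCentered A b c W μ₂ v₂ x₂) :
    0 ≤ ∑ i, (Real.sqrt μ₁ * Real.exp (v₁ i) - Real.sqrt μ₂ * Real.exp (v₂ i)) *
      (Real.sqrt μ₁ * Real.exp (-v₁ i) - Real.sqrt μ₂ * Real.exp (-v₂ i)) := by
  set p : Fin m → ℝ := Real.sqrt μ₁ • expV v₁ - Real.sqrt μ₂ • expV v₂ with hpdef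
  have hp : (Aᵀ).mulVec p = W.mulVec (x₁ - x₂) := by
    rw [hpdef, Matrix.mulVec_sub, Matrix.mulVec_smul, Matrix.mulVec_smul,
      h1.1, h2.1, Matrix.mulVec_sub]
    abel
  have hr : A.mulVec (x₁ - x₂) = Real.sqrt μ₁ • expV (-v₁) - Real.sqrt μ₂ • expV (-v₂) := by
    rw [Matrix.mulVec_sub]
    have e1 := h1.2
    have e2 := h2.2
    rw [e1, e2]
    abel
  have key := psd_dot A hW p (x₁ - x₂) hp
  rw [hr] at key
  have : p ⬝ᵥ (Real.sqrt μ₁ • expV (-v₁) - Real.sqrt μ₂ • expV (-v₂)) =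
      ∑ i, (Real.sqrt μ₁ * Real.exp (v₁ i) - Real.sqrt μ₂ * Real.exp (v₂ i)) *
      (Real.sqrt μ₁ * Real.exp (-v₁ i) - Real.sqrt μ₂ * Real.exp (-v₂ i)) := by
    rw [dotProduct]
    apply Finset.sum_congr rfl
    intro i _
    simp [hpdef, expV, Pi.sub_apply, Pi.smul_apply, smul_eq_mul]
  rwa [this] at key

lemma newton_sub {m n : ℕ} (A : Matrix (Fin m) (Fin n) ℝ) (b : Fin m → ℝ)
    (c : Fin n → ℝ) {W : Matrix (Fin n) (Fin n) ℝ} (hW : W.PosSemidef)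
    {μ : ℝ} (hμ : 0 < μ) {vh v d : Fin m → ℝ} {xh x : Fin n → ℝ}
    (h1 : IsCentered A b c W μ vh xh) (h2 : IsNewton A b c W μ v d x) :
    ∑ i, (qf (v i - vh i) + 2 * d i * Real.sinh (v i - vh i) + d i ^ 2) ≤ 0 := by
  set p : Fin m → ℝ := Real.sqrt μ • (expV v + expV v * d) - Real.sqrt μ • expV vh with hpdef
  have hp : (Aᵀ).mulVec p = W.mulVec (x - xh) := by
    rw [hpdef, Matrix.mulVec_sub, Matrix.mulVec_smul, Matrix.mulVec_smul,
      h2.1, h1.1, Matrix.mulVec_sub]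
    abel
  have hr : A.mulVec (x - xh) =
      Real.sqrt μ • (expV (-v) - expV (-v) * d) - Real.sqrt μ • expV (-vh) := by
    rw [Matrix.mulVec_sub, h2.2, h1.2]
    abel
  have key := psd_dot A hW p (x - xh) hp
  rw [hr] at key
  have hμs : Real.sqrt μ * Real.sqrt μ = μ := Real.mul_self_sqrt hμ.le
  have hexp : ∀ i, p i * (Real.sqrt μ • (expV (-v) - expV (-v) * d) -
      Real.sqrt μ • expV (-vh)) i =
      μ * (2 - (qf (v i - vh i) + 2 * d i * Real.sinh (v i - vh i) + d i ^ 2) - 2) := by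
    intro i
    simp only [hpdef, expV, Pi.sub_apply, Pi.add_apply, Pi.mul_apply, Pi.smul_apply,
      Pi.neg_apply, smul_eq_mul, qf]
    have c1 : Real.cosh (v i - vh i) = (Real.exp (v i - vh i) + Real.exp (-(v i - vh i)))/2 :=
      Real.cosh_eq _
    have s1 : Real.sinh (v i - vh i) = (Real.exp (v i - vh i) - Real.exp (-(v i - vh i)))/2 :=
      Real.sinh_eq _
    have e1 : Real.exp (v i - vh i) = Real.exp (v i) * Real.exp (-vh i) := by
      rw [← Real.exp_add]; ring_nf
    have e2 : Real.exp (-(v i - vh i)) = Real.exp (-v i) * Real.exp (vh i) := by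
      rw [← Real.exp_add]; ring_nf
    have e3 : Real.exp (v i) * Real.exp (-v i) = 1 := by
      rw [← Real.exp_add]; simp
    have e4 : Real.exp (vh i) * Real.exp (-vh i) = 1 := by
      rw [← Real.exp_add]; simp
    rw [c1, s1, e1, e2]
    linear_combination ((Real.exp (v i)*(1+d i) - Real.exp (vh i)) *
        (Real.exp (-v i)*(1-d i) - Real.exp (-vh i))) * hμs +
      (μ*(1-d i^2)) * e3 + μ * e4
  have hsum : p ⬝ᵥ (Real.sqrt μ • (expV (-v) - expV (-v) * d) - Real.sqrt μ • expV (-vh)) =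
      ∑ i, μ * (2 - (qf (v i - vh i) + 2 * d i * Real.sinh (v i - vh i) + d i ^ 2) - 2) := by
    rw [dotProduct]
    exact Finset.sum_congr rfl (fun i _ => hexp i)
  rw [hsum] at key
  have heq : ∑ i, μ * (2 - (qf (v i - vh i) + 2 * d i * Real.sinh (v i - vh i) + d i ^ 2) - 2)
      = -(μ * ∑ i, (qf (v i - vh i) + 2 * d i * Real.sinh (v i - vh i) + d i ^ 2)) := by
    rw [Finset.mul_sum, ← Finset.sum_neg_distrib]
    exact Finset.sum_congr rfl (fun i _ => by ring)
  rw [heq] at key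
  nlinarith [key, hμ]
lemma newton_contract {m : ℕ} (δ d : Fin m → ℝ)
    (hS : ∑ i, (qf (δ i) + 2 * d i * Real.sinh (δ i) + d i ^ 2) ≤ 0)
    (hh : ∑ i, qf (δ i) ≤ 1/2) :
    ∑ i, qf (δ i + d i) ≤ (∑ i, qf (δ i))^2 := by
  set h := ∑ i, qf (δ i) with hhdef
  have hnn : 0 ≤ h := Finset.sum_nonneg (fun i _ => qf_nonneg _)
  set e : Fin m → ℝ := fun i => d i + Real.sinh (δ i) with hedef
  set a : Fin m → ℝ := fun i => Real.cosh (δ i) - 1 with hadef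
  set g : Fin m → ℝ := fun i => Real.sinh (δ i) - δ i with hgdef
  have ha_nn : ∀ i, 0 ≤ a i := fun i => by
    simp only [hadef]; linarith [Real.one_le_cosh (δ i)]
  have id1 : ∀ i, qf (δ i) + 2 * d i * Real.sinh (δ i) + d i ^ 2 = e i ^ 2 - a i ^ 2 := by
    intro i
    simp only [hedef, hadef, qf]
    linear_combination Real.cosh_sq (δ i)
  have hE : ∑ i, e i ^ 2 ≤ ∑ i, a i ^ 2 := by
    have : ∑ i, (e i ^ 2 - a i ^ 2) ≤ 0 := by
      rw [← Finset.sum_congr rfl (fun i _ => id1 i)]; exact hS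
    rw [Finset.sum_sub_distrib] at this; linarith
  have hsum_a : ∑ i, a i = h / 2 := by
    rw [hhdef, Finset.sum_div]
    exact Finset.sum_congr rfl (fun i _ => by simp only [hadef, qf]; ring)
  have hA : ∑ i, a i ^ 2 ≤ (h/2)^2 := by
    have := Finset.sum_sq_le_sq_sum_of_nonneg (s := Finset.univ) (f := a)
      (fun i _ => ha_nn i)
    rwa [hsum_a] at this
  have hqle : ∀ i, qf (δ i) ≤ h := by
    intro i
    rw [hhdef]
    exact Finset.single_le_sum (fun j _ => qf_nonneg (δ j)) (Finset.mem_univ i)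
  have habsδ : ∀ i, |δ i| ≤ Real.log 3 := by
    intro i
    have h1 : Real.cosh (δ i) ≤ 5/4 := by
      have := hqle i; simp only [qf] at this; linarith
    have h2 : Real.exp |δ i| ≤ 3 := by
      have : Real.exp |δ i| ≤ 2 * Real.cosh |δ i| := by
        rw [Real.cosh_eq]
        have := (Real.exp (-|δ i|)).exp_pos
        linarith [Real.exp_pos (-|δ i|)]
      rw [Real.cosh_abs] at this
      linarith
    calc |δ i| = Real.log (Real.exp |δ i|) := (Real.log_exp _).symm
    _ ≤ Real.log 3 := Real.log_le_log (Real.exp_pos _) h2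
  have hg : ∀ i, |g i| ≤ a i / 2 := by
    intro i
    simp only [hgdef, hadef]
    have := abs_sinh_sub_le (habsδ i)
    linarith [this]
  have hG : ∑ i, g i ^ 2 ≤ (h/4)^2 := by
    have step : ∀ i, g i ^ 2 ≤ (a i / 2)^2 := by
      intro i
      rw [← sq_abs (g i)]
      apply pow_le_pow_left₀ (abs_nonneg _) (hg i)
    calc ∑ i, g i ^ 2 ≤ ∑ i, (a i / 2)^2 := Finset.sum_le_sum (fun i _ => step i)
    _ = (∑ i, a i ^ 2) / 4 := by rw [Finset.sum_div]; exact Finset.sum_congr rfl (fun i _ => by ring)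
    _ ≤ (h/2)^2/4 := by linarith
    _ = (h/4)^2 := by ring
  have hCS := Finset.sum_mul_sq_le_sq_mul_sq Finset.univ e g
  have hEb : ∑ i, e i ^ 2 ≤ (h/2)^2 := le_trans hE hA
  have hGnn : (0:ℝ) ≤ ∑ i, g i ^ 2 := Finset.sum_nonneg (fun i _ => sq_nonneg _)
  have hEnn : (0:ℝ) ≤ ∑ i, e i ^ 2 := Finset.sum_nonneg (fun i _ => sq_nonneg _)
  have heg_sq : (∑ i, e i * g i)^2 ≤ (h^2/8)^2 := by
    calc (∑ i, e i * g i)^2 ≤ (∑ i, e i ^2) * (∑ i, g i ^2) := hCS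
    _ ≤ (h/2)^2 * (h/4)^2 := by
        apply mul_le_mul hEb hG hGnn (by positivity)
    _ = (h^2/8)^2 := by ring
  have heg_le : ∑ i, e i * g i ≤ h^2/8 := by nlinarith [heg_sq, sq_nonneg h]
  have heg_ge : -(h^2/8) ≤ ∑ i, e i * g i := by nlinarith [heg_sq, sq_nonneg h]
  have hT2 : ∑ i, (δ i + d i)^2 ≤ (3*h/4)^2 := by
    have idT : ∀ i, (δ i + d i)^2 = e i ^2 - 2*(e i * g i) + g i ^2 := by
      intro i; simp only [hedef, hgdef]; ring
    calc ∑ i, (δ i + d i)^2 = ∑ i, (e i ^2 - 2*(e i * g i) + g i ^2) :=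
        Finset.sum_congr rfl (fun i _ => idT i)
    _ = (∑ i, e i ^2) - 2*(∑ i, e i * g i) + ∑ i, g i ^2 := by
        rw [Finset.sum_add_distrib, Finset.sum_sub_distrib, ← Finset.mul_sum]
    _ ≤ (h/2)^2 + 2*(h^2/8) + (h/4)^2 := by linarith
    _ = (3*h/4)^2 := by ring
  have hsqrt : Real.sqrt (∑ i, (δ i + d i)^2) ≤ 3*h/4 := by
    calc Real.sqrt (∑ i, (δ i + d i)^2) ≤ Real.sqrt ((3*h/4)^2) := Real.sqrt_le_sqrt hT2
    _ = 3*h/4 := Real.sqrt_sq (by positivity)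
  calc ∑ i, qf (δ i + d i) ≤ qf (Real.sqrt (∑ i, (δ i + d i)^2)) :=
      sum_qf_le Finset.univ (fun i => δ i + d i)
  _ ≤ qf (3*h/4) := qf_mono (Real.sqrt_nonneg _) hsqrt
  _ ≤ (3*h/4)^2 * Real.cosh (3*h/4) := qf_le_sq_mul_cosh _
  _ ≤ h^2 := by
      have hu : 3*h/4 ≤ 3/8 := by linarith
      have hc := cosh_le_inv (t := 3*h/4) (by nlinarith)
      have h1c := Real.one_le_cosh (3*h/4)
      have hu2 : (3*h/4)^2 ≤ 9/64 := by nlinarith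
      have hCb : Real.cosh (3*h/4) ≤ 128/119 := by nlinarith [hc, h1c, hu2]
      calc (3*h/4)^2 * Real.cosh (3*h/4) ≤ (3*h/4)^2 * (128/119) :=
            mul_le_mul_of_nonneg_left hCb (sq_nonneg _)
      _ ≤ h^2 := by nlinarith [sq_nonneg h]

lemma enormV_nonneg {m : ℕ} (d : Fin m → ℝ) : 0 ≤ enormV d := Real.sqrt_nonneg _

lemma enormV_le_of_sq {m : ℕ} {d : Fin m → ℝ} {cc : ℝ} (hc : 0 ≤ cc)
    (h : ∑ i, d i ^ 2 ≤ cc ^ 2) : enormV d ≤ cc := by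
  unfold enormV
  calc Real.sqrt (∑ i, d i ^ 2) ≤ Real.sqrt (cc ^ 2) := Real.sqrt_le_sqrt h
  _ = cc := Real.sqrt_sq hc

lemma enormV_add_le {m : ℕ} (u v : Fin m → ℝ) : enormV (u + v) ≤ enormV u + enormV v := by
  have hCS := Finset.sum_mul_sq_le_sq_mul_sq Finset.univ u v
  have hU : (0:ℝ) ≤ ∑ i, u i ^ 2 := Finset.sum_nonneg (fun i _ => sq_nonneg _)
  have hV : (0:ℝ) ≤ ∑ i, v i ^ 2 := Finset.sum_nonneg (fun i _ => sq_nonneg _)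
  have h1 : ∑ i, u i * v i ≤ Real.sqrt (∑ i, u i ^ 2) * Real.sqrt (∑ i, v i ^ 2) := by
    have h2 : (∑ i, u i * v i) ^ 2 ≤
        (Real.sqrt (∑ i, u i ^ 2) * Real.sqrt (∑ i, v i ^ 2)) ^ 2 := by
      rw [mul_pow, Real.sq_sqrt hU, Real.sq_sqrt hV]; exact hCS
    calc ∑ i, u i * v i ≤ |∑ i, u i * v i| := le_abs_self _
    _ = Real.sqrt ((∑ i, u i * v i) ^ 2) := (Real.sqrt_sq_eq_abs _).symm
    _ ≤ Real.sqrt ((Real.sqrt (∑ i, u i ^ 2) * Real.sqrt (∑ i, v i ^ 2)) ^ 2) :=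
        Real.sqrt_le_sqrt h2
    _ = Real.sqrt (∑ i, u i ^ 2) * Real.sqrt (∑ i, v i ^ 2) := Real.sqrt_sq (by positivity)
  apply enormV_le_of_sq (add_nonneg (enormV_nonneg u) (enormV_nonneg v))
  have hexpand : (enormV u + enormV v) ^ 2 = (∑ i, u i ^ 2)
      + 2 * (Real.sqrt (∑ i, u i ^ 2) * Real.sqrt (∑ i, v i ^ 2)) + (∑ i, v i ^ 2) := by
    unfold enormV
    rw [add_sq, Real.sq_sqrt hU, Real.sq_sqrt hV]; ring
  have hsum : ∑ i, (u + v) i ^ 2 =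
      (∑ i, u i ^ 2) + 2 * (∑ i, u i * v i) + (∑ i, v i ^ 2) := by
    rw [Finset.mul_sum, ← Finset.sum_add_distrib, ← Finset.sum_add_distrib]
    exact Finset.sum_congr rfl (fun i _ => by simp only [Pi.add_apply]; ring)
  rw [hexpand, hsum]
  linarith

lemma diverg_eq {m : ℕ} (u v : Fin m → ℝ) : diverg u v = ∑ i, qf (u i - v i) := by
  unfold diverg
  have key : ∀ i : Fin m, Real.exp (u i) * Real.exp (-v i) + Real.exp (-u i) * Real.exp (v i)
      = qf (u i - v i) + 2 := by
    intro i
    have e1 : Real.exp (u i) * Real.exp (-v i) = Real.exp (u i - v i) := by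
      rw [← Real.exp_add]; ring_nf
    have e2 : Real.exp (-u i) * Real.exp (v i) = Real.exp (-(u i - v i)) := by
      rw [← Real.exp_add]; ring_nf
    rw [e1, e2]
    unfold qf
    rw [Real.cosh_eq]; ring
  have : (∑ i, Real.exp (u i) * Real.exp (-v i)) + (∑ i, Real.exp (-u i) * Real.exp (v i))
      = ∑ i, (qf (u i - v i) + 2) := by
    rw [← Finset.sum_add_distrib]
    exact Finset.sum_congr rfl (fun i _ => key i)
  rw [this, Finset.sum_add_distrib, Finset.sum_const, Finset.card_univ, Fintype.card_fin,
    nsmul_eq_mul]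
  ring

/-- correctness of the short-step algorithm. Centered points `v̂(μ)`
exist for all `μ > 0`; `q(t) = 2(cosh t − 1)` and `qinv` is its nonnegative inverse;
`θ ∈ (0,1/2]`, `ε ∈ (0, q⁻¹(θ))`, `ζ = q⁻¹(θ) − ε`, `k > 1` and `N` satisfy
`θ^(2^N) ≤ ε²` and `(1/2)·log k = q⁻¹(ζ²/m)`. The short-step iteration sets
`μ_{j+1} = μ_j/k` and obtains `v_{j+1}` from `v_j` by `N` full Newton steps at
parameter `μ_{j+1}`, starting from `v₀ = v̂(μ₀)`. Then whenever
`‖v_j − v̂(μ_j)‖ ≤ ε` one has `h(v̂(μ_{j+1}), v_j) ≤ θ` and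
`‖v_{j+1} − v̂(μ_{j+1})‖ ≤ ε`; consequently for every `μ_f > 0`, with
`J = ⌈c⁻¹·√m·log(μ₀/μ_f)⌉` and `c = 2·q⁻¹(ζ²)`, the output (after at most `N·J`
Newton steps) satisfies `μ_J ≤ μ_f` and `‖v_J − v̂(μ_J)‖ ≤ ε`. -/
theorem stmt_14 {m n : ℕ} (hm : 0 < m)
    (A : Matrix (Fin m) (Fin n) ℝ) (b : Fin m → ℝ) (c : Fin n → ℝ)
    (W : Matrix (Fin n) (Fin n) ℝ) (hW : W.PosSemidef) (hAW : (Aᵀ * A + W).PosDef)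
    (vhat : ℝ → Fin m → ℝ) (xhat : ℝ → Fin n → ℝ)
    (hcent : ∀ μ : ℝ, 0 < μ → IsCentered A b c W μ (vhat μ) (xhat μ))
    (qinv : ℝ → ℝ)
    (hqinv_nonneg : ∀ s, 0 ≤ s → 0 ≤ qinv s)
    (hqinv : ∀ s, 0 ≤ s → 2 * (Real.cosh (qinv s) - 1) = s)
    (θ ε ζ : ℝ) (hθ : 0 < θ) (hθ' : θ ≤ 1 / 2)
    (hε : 0 < ε) (hε' : ε < qinv θ) (hζ : ζ = qinv θ - ε)
    (k : ℝ) (hk : 1 < k) (N : ℕ)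
    (hN : θ ^ (2 ^ N) ≤ ε ^ 2)
    (hk2 : (1 / 2) * Real.log k = qinv (ζ ^ 2 / m))
    (μ₀ : ℝ) (hμ₀ : 0 < μ₀)
    (μseq : ℕ → ℝ) (hμinit : μseq 0 = μ₀) (hμrec : ∀ j, μseq (j + 1) = μseq j / k)
    (vseq : ℕ → Fin m → ℝ) (hvinit : vseq 0 = vhat μ₀)
    (w : ℕ → ℕ → Fin m → ℝ)
    (hw0 : ∀ j, w j 0 = vseq j)
    (hwstep : ∀ j, ∀ i < N, ∃ d x, IsNewton A b c W (μseq (j + 1)) (w j i) d x ∧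
      w j (i + 1) = w j i + d)
    (hvnext : ∀ j, vseq (j + 1) = w j N) :
    (∀ j, enormV (vseq j - vhat (μseq j)) ≤ ε →
      diverg (vhat (μseq (j + 1))) (vseq j) ≤ θ ∧
      enormV (vseq (j + 1) - vhat (μseq (j + 1))) ≤ ε) ∧
    ∀ μf : ℝ, 0 < μf →
      ∀ J : ℕ, J = ⌈(2 * qinv (ζ ^ 2))⁻¹ * Real.sqrt m * Real.log (μ₀ / μf)⌉₊ →
        μseq J ≤ μf ∧ enormV (vseq J - vhat (μseq J)) ≤ ε := by
  have hk0 : (0:ℝ) < k := lt_trans one_pos hk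
  have hμpos : ∀ j, 0 < μseq j := by
    intro j
    induction j with
    | zero => rw [hμinit]; exact hμ₀
    | succ i ih => rw [hμrec]; exact div_pos ih hk0
  have hζpos : 0 < ζ := by rw [hζ]; linarith
  have hmpos : (0:ℝ) < (m:ℝ) := by exact_mod_cast hm
  have hqθ : qf (qinv θ) = θ := by unfold qf; exact hqinv θ hθ.le
  have hqθnn : 0 ≤ qinv θ := hqinv_nonneg θ hθ.le
  have hζm_nn : (0:ℝ) ≤ ζ^2 / m := by positivity
  have hq2 : qf (qinv (ζ^2/(m:ℝ))) = ζ^2/(m:ℝ) := by unfold qf; exact hqinv _ hζm_nn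
  have hζmnn : 0 ≤ qinv (ζ^2/(m:ℝ)) := hqinv_nonneg _ hζm_nn
  -- the per-iteration step
  have hstep : ∀ j, enormV (vseq j - vhat (μseq j)) ≤ ε →
      diverg (vhat (μseq (j + 1))) (vseq j) ≤ θ ∧
      enormV (vseq (j + 1) - vhat (μseq (j + 1))) ≤ ε := by
    intro j hj
    have hμp : 0 < μseq j := hμpos j
    have hμ'p : 0 < μseq (j+1) := hμpos (j+1)
    have hdrift0 := center_sub A b c hW (hcent _ hμp) (hcent _ hμ'p)
    have hsμ : Real.sqrt (μseq j) * Real.sqrt (μseq j) = μseq j := Real.mul_self_sqrt hμp.le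
    have hsμ' : Real.sqrt (μseq (j+1)) * Real.sqrt (μseq (j+1)) = μseq (j+1) :=
      Real.mul_self_sqrt hμ'p.le
    have hterm : ∀ i, (Real.sqrt (μseq j) * Real.exp (vhat (μseq j) i)
          - Real.sqrt (μseq (j+1)) * Real.exp (vhat (μseq (j+1)) i)) *
        (Real.sqrt (μseq j) * Real.exp (-vhat (μseq j) i)
          - Real.sqrt (μseq (j+1)) * Real.exp (-vhat (μseq (j+1)) i))
        = μseq j + μseq (j+1) - Real.sqrt (μseq j) * Real.sqrt (μseq (j+1)) *
            (2 * Real.cosh (vhat (μseq j) i - vhat (μseq (j+1)) i)) := by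
      intro i
      have e1 : Real.exp (vhat (μseq j) i - vhat (μseq (j+1)) i)
          = Real.exp (vhat (μseq j) i) * Real.exp (-vhat (μseq (j+1)) i) := by
        rw [← Real.exp_add]; ring_nf
      have e2 : Real.exp (-(vhat (μseq j) i - vhat (μseq (j+1)) i))
          = Real.exp (-vhat (μseq j) i) * Real.exp (vhat (μseq (j+1)) i) := by
        rw [← Real.exp_add]; ring_nf
      have e3 : Real.exp (vhat (μseq j) i) * Real.exp (-vhat (μseq j) i) = 1 := by
        rw [← Real.exp_add]; simp
      have e4 : Real.exp (vhat (μseq (j+1)) i) * Real.exp (-vhat (μseq (j+1)) i) = 1 := by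
        rw [← Real.exp_add]; simp
      rw [Real.cosh_eq, e1, e2]
      linear_combination (Real.exp (vhat (μseq j) i) * Real.exp (-vhat (μseq j) i)) * hsμ
        + (Real.exp (vhat (μseq (j+1)) i) * Real.exp (-vhat (μseq (j+1)) i)) * hsμ'
        + (μseq j) * e3 + (μseq (j+1)) * e4
    have hdriftsum : 0 ≤ (m:ℝ) * (μseq j + μseq (j+1))
        - Real.sqrt (μseq j) * Real.sqrt (μseq (j+1)) *
          (∑ i, 2 * Real.cosh (vhat (μseq j) i - vhat (μseq (j+1)) i)) := by
      rw [Finset.sum_congr rfl (fun i _ => hterm i)] at hdrift0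
      rw [Finset.sum_sub_distrib, ← Finset.mul_sum] at hdrift0
      have hconst : ∑ _i : Fin m, (μseq j + μseq (j+1)) = (m:ℝ) * (μseq j + μseq (j+1)) := by
        rw [Finset.sum_const, Finset.card_univ, Fintype.card_fin, nsmul_eq_mul]
      rw [hconst] at hdrift0
      linarith
    have hskpos : 0 < Real.sqrt k := Real.sqrt_pos.mpr hk0
    have hsk2 : Real.sqrt k * Real.sqrt k = k := Real.mul_self_sqrt hk0.le
    have hexpL : Real.exp ((1/2 : ℝ) * Real.log k) = Real.sqrt k := by
      rw [Real.sqrt_eq_rpow, Real.rpow_def_of_pos hk0]; ring_nf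
    have hsμ'div : Real.sqrt (μseq (j+1)) = Real.sqrt (μseq j) / Real.sqrt k := by
      rw [hμrec j, Real.sqrt_div hμp.le]
    have hss : Real.sqrt (μseq j) = Real.sqrt (μseq (j+1)) * Real.sqrt k := by
      rw [hsμ'div]; field_simp
    have hμ'k : μseq (j+1) * k = μseq j := by rw [hμrec j]; field_simp
    have hkinv : Real.sqrt k * (Real.sqrt k)⁻¹ = 1 := mul_inv_cancel₀ hskpos.ne'
    have hcoshL : μseq j + μseq (j+1) = Real.sqrt (μseq j) * Real.sqrt (μseq (j+1)) *
        (2 * Real.cosh ((1/2 : ℝ) * Real.log k)) := by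
      calc μseq j + μseq (j+1) = μseq (j+1) * k + μseq (j+1) := by rw [hμ'k]
      _ = μseq (j+1) * (Real.sqrt k * Real.sqrt k)
          + μseq (j+1) * (Real.sqrt k * (Real.sqrt k)⁻¹) := by rw [hsk2, hkinv]; ring
      _ = (Real.sqrt (μseq (j+1)) * Real.sqrt (μseq (j+1))) * (Real.sqrt k * Real.sqrt k)
          + (Real.sqrt (μseq (j+1)) * Real.sqrt (μseq (j+1)))
            * (Real.sqrt k * (Real.sqrt k)⁻¹) := by rw [hsμ']
      _ = (Real.sqrt (μseq (j+1)) * Real.sqrt k) * Real.sqrt (μseq (j+1))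
          * (2 * ((Real.sqrt k + (Real.sqrt k)⁻¹)/2)) := by ring
      _ = Real.sqrt (μseq j) * Real.sqrt (μseq (j+1))
          * (2 * Real.cosh ((1/2 : ℝ) * Real.log k)) := by
            rw [← hss, Real.cosh_eq, hexpL, Real.exp_neg, hexpL]
    have hsumcosh : ∑ i, 2 * Real.cosh (vhat (μseq j) i - vhat (μseq (j+1)) i)
        ≤ (m:ℝ) * (2 * Real.cosh ((1/2 : ℝ) * Real.log k)) := by
      have hprod : 0 < Real.sqrt (μseq j) * Real.sqrt (μseq (j+1)) := by positivity
      have h5 : 0 ≤ Real.sqrt (μseq j) * Real.sqrt (μseq (j+1)) *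
          ((m:ℝ) * (2 * Real.cosh ((1/2 : ℝ) * Real.log k))
            - ∑ i, 2 * Real.cosh (vhat (μseq j) i - vhat (μseq (j+1)) i)) := by
        nlinarith [hdriftsum, hcoshL]
      nlinarith [h5, hprod]
    have hdrift : ∑ i, qf (vhat (μseq j) i - vhat (μseq (j+1)) i) ≤ ζ^2 := by
      have hqsum : ∑ i, qf (vhat (μseq j) i - vhat (μseq (j+1)) i)
          = (∑ i, 2 * Real.cosh (vhat (μseq j) i - vhat (μseq (j+1)) i)) - 2*(m:ℝ) := by
        have : ∀ i : Fin m, qf (vhat (μseq j) i - vhat (μseq (j+1)) i)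
            = 2 * Real.cosh (vhat (μseq j) i - vhat (μseq (j+1)) i) - 2 := by
          intro i; unfold qf; ring
        rw [Finset.sum_congr rfl (fun i _ => this i), Finset.sum_sub_distrib,
          Finset.sum_const, Finset.card_univ, Fintype.card_fin, nsmul_eq_mul]
        ring
      have hqL : 2 * Real.cosh ((1/2 : ℝ) * Real.log k) = ζ^2/(m:ℝ) + 2 := by
        rw [hk2]
        unfold qf at hq2
        linarith
      have hm' : (m:ℝ) ≠ 0 := hmpos.ne'
      have hfr : (m:ℝ) * (ζ^2/(m:ℝ) + 2) = ζ^2 + 2*(m:ℝ) := by field_simp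
      rw [hqsum]
      rw [hqL] at hsumcosh
      linarith
    have hdriftnorm : enormV (vhat (μseq j) - vhat (μseq (j+1))) ≤ ζ := by
      apply enormV_le_of_sq hζpos.le
      calc ∑ i, (vhat (μseq j) - vhat (μseq (j+1))) i ^ 2
          = ∑ i, (vhat (μseq j) i - vhat (μseq (j+1)) i) ^ 2 := by
            exact Finset.sum_congr rfl (fun i _ => by simp [Pi.sub_apply])
      _ ≤ ∑ i, qf (vhat (μseq j) i - vhat (μseq (j+1)) i) :=
            Finset.sum_le_sum (fun i _ => sq_le_qf _)
      _ ≤ ζ^2 := hdrift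
    have htri : enormV (vseq j - vhat (μseq (j+1))) ≤ ε + ζ := by
      have hsplit : vseq j - vhat (μseq (j+1)) =
          (vseq j - vhat (μseq j)) + (vhat (μseq j) - vhat (μseq (j+1))) := by
        funext i; simp only [Pi.sub_apply, Pi.add_apply]; ring
      rw [hsplit]
      calc enormV ((vseq j - vhat (μseq j)) + (vhat (μseq j) - vhat (μseq (j+1))))
          ≤ enormV (vseq j - vhat (μseq j)) + enormV (vhat (μseq j) - vhat (μseq (j+1))) :=
            enormV_add_le _ _
      _ ≤ ε + ζ := add_le_add hj hdriftnorm
    have hεζ : ε + ζ = qinv θ := by rw [hζ]; ring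
    have h0le : ∑ i, qf (vseq j i - vhat (μseq (j+1)) i) ≤ θ := by
      calc ∑ i, qf (vseq j i - vhat (μseq (j+1)) i)
          ≤ qf (Real.sqrt (∑ i, (vseq j i - vhat (μseq (j+1)) i) ^ 2)) :=
            sum_qf_le Finset.univ _
      _ ≤ qf (qinv θ) := by
          apply qf_mono (Real.sqrt_nonneg _)
          have heq : Real.sqrt (∑ i, (vseq j i - vhat (μseq (j+1)) i) ^ 2)
              = enormV (vseq j - vhat (μseq (j+1))) := by
            unfold enormV
            rfl
          rw [heq, ← hεζ]
          exact htri
      _ = θ := hqθ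
    have hdiverg : diverg (vhat (μseq (j+1))) (vseq j) ≤ θ := by
      rw [diverg_eq]
      calc ∑ i, qf (vhat (μseq (j+1)) i - vseq j i)
          = ∑ i, qf (vseq j i - vhat (μseq (j+1)) i) := by
            apply Finset.sum_congr rfl
            intro i _
            rw [show vhat (μseq (j+1)) i - vseq j i
              = -(vseq j i - vhat (μseq (j+1)) i) by ring, qf_even]
      _ ≤ θ := h0le
    have hiter : ∀ i, i ≤ N → ∑ r, qf (w j i r - vhat (μseq (j+1)) r) ≤ θ ^ (2^i) := by
      intro i
      induction i with
      | zero =>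
        intro _
        rw [hw0 j]
        simpa using h0le
      | succ i ih =>
        intro hiN
        have hi : i < N := Nat.lt_of_succ_le hiN
        have hprev := ih (Nat.le_of_lt hi)
        obtain ⟨d, x, hnt, hsucc⟩ := hwstep j i hi
        have hS := newton_sub A b c hW hμ'p (hcent _ hμ'p) hnt
        have hθi : θ ^ (2^i) ≤ θ := by
          calc θ ^ (2^i) ≤ θ ^ 1 := pow_le_pow_of_le_one hθ.le (by linarith) Nat.one_le_two_pow
          _ = θ := pow_one θ
        have hhalf : ∑ r, qf (w j i r - vhat (μseq (j+1)) r) ≤ 1/2 :=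
          le_trans hprev (le_trans hθi hθ')
        have hc := newton_contract (fun r => w j i r - vhat (μseq (j+1)) r) d
          (by simpa using hS) (by simpa using hhalf)
        have hnn0 : 0 ≤ ∑ r, qf (w j i r - vhat (μseq (j+1)) r) :=
          Finset.sum_nonneg (fun r _ => qf_nonneg _)
        calc ∑ r, qf (w j (i+1) r - vhat (μseq (j+1)) r)
            = ∑ r, qf ((w j i r - vhat (μseq (j+1)) r) + d r) := by
              apply Finset.sum_congr rfl
              intro r _
              rw [hsucc]
              simp only [Pi.add_apply]
              congr 1
              ring
        _ ≤ (∑ r, qf (w j i r - vhat (μseq (j+1)) r)) ^ 2 := by simpa using hc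
        _ ≤ (θ ^ (2^i)) ^ 2 := pow_le_pow_left₀ hnn0 hprev 2
        _ = θ ^ (2^(i+1)) := by rw [← pow_mul, pow_succ]
    have hfin : ∑ r, qf (vseq (j+1) r - vhat (μseq (j+1)) r) ≤ ε ^ 2 := by
      rw [hvnext j]
      exact le_trans (hiter N le_rfl) hN
    refine ⟨hdiverg, ?_⟩
    apply enormV_le_of_sq hε.le
    calc ∑ i, (vseq (j+1) - vhat (μseq (j+1))) i ^ 2
        = ∑ i, (vseq (j+1) i - vhat (μseq (j+1)) i) ^ 2 :=
          Finset.sum_congr rfl (fun i _ => by simp [Pi.sub_apply])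
    _ ≤ ∑ i, qf (vseq (j+1) i - vhat (μseq (j+1)) i) :=
          Finset.sum_le_sum (fun i _ => sq_le_qf _)
    _ ≤ ε ^ 2 := hfin
  constructor
  · exact hstep
  · intro μf hμf J hJ
    have hnorm_all : ∀ j, enormV (vseq j - vhat (μseq j)) ≤ ε := by
      intro j
      induction j with
      | zero =>
        have h0 : vseq 0 - vhat (μseq 0) = 0 := by rw [hvinit, hμinit]; simp
        rw [h0]
        have : enormV (0 : Fin m → ℝ) = 0 := by simp [enormV]
        rw [this]
        exact hε.le
      | succ i ih => exact (hstep i ih).2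
    refine ⟨?_, hnorm_all J⟩
    have hμeq : ∀ j, μseq j = μ₀ / k ^ j := by
      intro j
      induction j with
      | zero => simpa using hμinit
      | succ i ih => rw [hμrec, ih, pow_succ]; field_simp
    rw [hμeq J]
    rcases le_or_gt μ₀ μf with hle | hlt
    · have h1 : (1:ℝ) ≤ k ^ J := one_le_pow₀ hk.le
      calc μ₀ / k ^ J ≤ μ₀ := div_le_self hμ₀.le h1
      _ ≤ μf := hle
    · have hLpos : 0 < Real.log (μ₀/μf) := Real.log_pos ((one_lt_div hμf).mpr hlt)
      have hqζ : qf (qinv (ζ^2)) = ζ^2 := by unfold qf; exact hqinv _ (by positivity)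
      have hqζnn : 0 ≤ qinv (ζ^2) := hqinv_nonneg _ (by positivity)
      have hqζpos : 0 < qinv (ζ^2) := by
        rcases eq_or_lt_of_le hqζnn with h0 | h
        · exfalso
          rw [← h0] at hqζ
          unfold qf at hqζ
          simp at hqζ
          nlinarith [hζpos]
        · exact h
      have hsm : Real.sqrt (m:ℝ) * Real.sqrt (m:ℝ) = (m:ℝ) := Real.mul_self_sqrt hmpos.le
      have hsmpos : 0 < Real.sqrt (m:ℝ) := Real.sqrt_pos.mpr hmpos
      have hm1 : (1:ℝ) ≤ Real.sqrt (m:ℝ) := by nlinarith [hsm, hsmpos, hmpos,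
        (show (1:ℝ) ≤ (m:ℝ) by exact_mod_cast hm)]
      have hkey : qinv (ζ^2) ≤ Real.sqrt (m:ℝ) * qinv (ζ^2/(m:ℝ)) := by
        have hsc := qf_scale (α := (Real.sqrt (m:ℝ))⁻¹) (t := qinv (ζ^2))
          (by positivity) (by rw [inv_le_one_iff₀]; right; exact hm1) hqζnn
        have h6 : ((Real.sqrt (m:ℝ))⁻¹) ^ 2 * qf (qinv (ζ^2)) = ζ^2/(m:ℝ) := by
          rw [hqζ, inv_pow, Real.sq_sqrt hmpos.le]
          ring
        have h7 : qf ((Real.sqrt (m:ℝ))⁻¹ * qinv (ζ^2)) ≤ qf (qinv (ζ^2/(m:ℝ))) := by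
          rw [hq2]; rw [← h6]; exact hsc
        have h8 := qf_lt_imp (by positivity) hζmnn h7
        calc qinv (ζ^2) = Real.sqrt (m:ℝ) * ((Real.sqrt (m:ℝ))⁻¹ * qinv (ζ^2)) := by
              field_simp
        _ ≤ Real.sqrt (m:ℝ) * qinv (ζ^2/(m:ℝ)) := mul_le_mul_of_nonneg_left h8 hsmpos.le
      have hζm_pos : 0 < qinv (ζ^2/(m:ℝ)) := by nlinarith [hkey, hqζpos, hsmpos, hζmnn]
      have hJge : (2 * qinv (ζ^2))⁻¹ * Real.sqrt (m:ℝ) * Real.log (μ₀/μf) ≤ (J:ℝ) := by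
        rw [hJ]; exact Nat.le_ceil _
      have hlogk : Real.log k = 2 * qinv (ζ^2/(m:ℝ)) := by linarith [hk2]
      have hstepsize : Real.log (μ₀/μf) ≤ (J:ℝ) * Real.log k := by
        rw [hlogk]
        have h9 : (2 * qinv (ζ^2))⁻¹ * Real.sqrt (m:ℝ) * Real.log (μ₀/μf)
              * (2 * qinv (ζ^2/(m:ℝ)))
            ≤ (J:ℝ) * (2 * qinv (ζ^2/(m:ℝ))) :=
          mul_le_mul_of_nonneg_right hJge (by positivity)
        have h10 : Real.log (μ₀/μf) ≤ (2 * qinv (ζ^2))⁻¹ * Real.sqrt (m:ℝ)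
            * Real.log (μ₀/μf) * (2 * qinv (ζ^2/(m:ℝ))) := by
          have heq : (2 * qinv (ζ^2))⁻¹ * Real.sqrt (m:ℝ) * Real.log (μ₀/μf)
              * (2 * qinv (ζ^2/(m:ℝ)))
              = Real.log (μ₀/μf) * ((Real.sqrt (m:ℝ) * qinv (ζ^2/(m:ℝ))) / qinv (ζ^2)) := by
            field_simp
          rw [heq]
          have hge1 : (1:ℝ) ≤ (Real.sqrt (m:ℝ) * qinv (ζ^2/(m:ℝ))) / qinv (ζ^2) :=
            (one_le_div hqζpos).mpr hkey
          nlinarith [hLpos, hge1]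
        linarith
      have hk_exp : (k:ℝ) ^ J = Real.exp ((J:ℝ) * Real.log k) := by
        rw [Real.exp_nat_mul, Real.exp_log hk0]
      have hL_exp : μ₀/μf = Real.exp (Real.log (μ₀/μf)) := (Real.exp_log (by positivity)).symm
      have hfinal : μ₀/μf ≤ k ^ J := by
        rw [hk_exp, hL_exp]
        exact Real.exp_le_exp.mpr hstepsize
      rw [div_le_iff₀ (pow_pos hk0 J)]
      rw [div_le_iff₀ hμf] at hfinal
      linarith [hfinal]
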